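/- Douglas lemma (adjoint form): Given Hilbert space operators A : Z → Y and B : Z → X, there exists an operator T : Y → X with T A = B and ‖T‖ ≤ 1 if and only if B*B ≼ A*A (i.e., A*A − B*B is a positive operator). -/

import Mathlib

open ContinuousLinearMap

lemma aux_re
    (X Y Z : Type*)
    [NormedAddCommGroup X] [InnerProductSpace ℂ X] [CompleteSpace X]
    [NormedAddCommGroup Y] [InnerProductSpace ℂ Y] [CompleteSpace Y]
    [NormedAddCommGroup Z] [InnerProductSpace ℂ Z] [CompleteSpace Z]
    (A : Z →L[ℂ] Y) (B : Z →L[ℂ] X) (z : Z) :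
    (ContinuousLinearMap.adjoint A ∘L A
        - ContinuousLinearMap.adjoint B ∘L B).reApplyInnerSelf z
      = ‖A z‖ ^ 2 - ‖B z‖ ^ 2 := by
  simp only [reApplyInnerSelf, sub_apply, comp_apply, inner_sub_left, adjoint_inner_left,
    map_sub]
  rw [@inner_self_eq_norm_sq ℂ, @inner_self_eq_norm_sq ℂ]

/-- **Douglas lemma (adjoint form).** Given Hilbert space operators
`A : Z → Y` and `B : Z → X`, there exists `T : Y → X` with `T A = B` and
`‖T‖ ≤ 1` if and only if `B*B ≼ A*A`, i.e. `A*A − B*B` is a positive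
operator. -/
theorem douglas_lemma_adjoint
    (X Y Z : Type*)
    [NormedAddCommGroup X] [InnerProductSpace ℂ X] [CompleteSpace X]
    [NormedAddCommGroup Y] [InnerProductSpace ℂ Y] [CompleteSpace Y]
    [NormedAddCommGroup Z] [InnerProductSpace ℂ Z] [CompleteSpace Z]
    (A : Z →L[ℂ] Y) (B : Z →L[ℂ] X) :
    (∃ T : Y →L[ℂ] X, T ∘L A = B ∧ ‖T‖ ≤ 1) ↔
      (ContinuousLinearMap.adjoint A ∘L A
        - ContinuousLinearMap.adjoint B ∘L B).IsPositive := by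
  constructor
  · rintro ⟨T, hTA, hT⟩
    constructor
    · rw [← ContinuousLinearMap.isSelfAdjoint_iff_isSymmetric, ContinuousLinearMap.isSelfAdjoint_iff']
      rw [map_sub, adjoint_comp, adjoint_comp, adjoint_adjoint, adjoint_adjoint]
    · intro z
      rw [aux_re]
      have hBz : ‖B z‖ ≤ ‖A z‖ := by
        have : B z = T (A z) := by rw [← hTA]; rfl
        rw [this]
        calc ‖T (A z)‖ ≤ ‖T‖ * ‖A z‖ := T.le_opNorm _
          _ ≤ 1 * ‖A z‖ := by gcongr
          _ = ‖A z‖ := one_mul _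
      nlinarith [norm_nonneg (B z), norm_nonneg (A z)]
  · intro h
    have hle : ∀ z : Z, ‖B z‖ ≤ ‖A z‖ := by
      intro z
      have h2 := h.2 z
      rw [aux_re] at h2
      nlinarith [norm_nonneg (B z), norm_nonneg (A z)]
    set Aₗ := (A : Z →ₗ[ℂ] Y) with hAₗ
    set Bₗ := (B : Z →ₗ[ℂ] X) with hBₗ
    have hker : LinearMap.ker Aₗ ≤ LinearMap.ker Bₗ := by
      intro z hz
      rw [LinearMap.mem_ker] at hz ⊢
      have := hle z
      rw [show Aₗ z = A z from rfl, show Bₗ z = B z from rfl] at *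
      rw [hz, norm_zero] at this
      exact norm_le_zero_iff.mp this
    let g : (Z ⧸ LinearMap.ker Aₗ) →ₗ[ℂ] X := (LinearMap.ker Aₗ).liftQ Bₗ hker
    let eA := Aₗ.quotKerEquivRange
    let f₀ₗ : LinearMap.range Aₗ →ₗ[ℂ] X := g ∘ₗ (eA.symm : (LinearMap.range Aₗ) →ₗ[ℂ] _)
    have hf₀ : ∀ (z : Z) (hz : Aₗ z ∈ LinearMap.range Aₗ), f₀ₗ ⟨Aₗ z, hz⟩ = B z := by
      intro z hz
      have h1 : eA.symm ⟨Aₗ z, hz⟩ = (LinearMap.ker Aₗ).mkQ z :=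
        Aₗ.quotKerEquivRange_symm_apply_image z hz
      show g (eA.symm ⟨Aₗ z, hz⟩) = B z
      rw [h1]
      rw [Submodule.mkQ_apply]
      exact (LinearMap.ker Aₗ).liftQ_apply Bₗ z
    have hb : ∀ y : LinearMap.range Aₗ, ‖f₀ₗ y‖ ≤ 1 * ‖y‖ := by
      rintro ⟨y, z, rfl⟩
      rw [one_mul, hf₀ z ⟨z, rfl⟩]
      exact hle z
    let f₀ : (LinearMap.range Aₗ) →L[ℂ] X := f₀ₗ.mkContinuous 1 hb
    set M := (LinearMap.range Aₗ).topologicalClosure with hM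
    haveI : CompleteSpace M := (Submodule.isClosed_topologicalClosure _).completeSpace_coe
    let eₗ : LinearMap.range Aₗ →ₗ[ℂ] M :=
      Submodule.inclusion (Submodule.le_topologicalClosure (LinearMap.range Aₗ))
    let e : (LinearMap.range Aₗ) →L[ℂ] M := eₗ.mkContinuous 1 (fun x => by
      rw [one_mul]; rfl)
    have h_e : ∀ x, ‖x‖ ≤ (1 : NNReal) * ‖e x‖ := fun x => by
      rw [NNReal.coe_one, one_mul]; rfl
    have h_dense : DenseRange e := by
      have : Dense (Set.range e) := by
        refine Topology.IsInducing.subtypeVal.dense_iff.2 fun x => ?_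
        rw [← Set.range_comp]
        have hx : (x : Y) ∈ closure (LinearMap.range Aₗ : Set Y) := by
          rw [← Submodule.topologicalClosure_coe]; exact x.prop
        convert hx using 2
        ext y
        constructor
        · rintro ⟨u, rfl⟩; exact u.prop
        · intro hy; exact ⟨⟨y, hy⟩, rfl⟩
      exact this
    let fbar := f₀.extend e
    have hfbar_norm : ‖fbar‖ ≤ 1 := by
      have h1 := f₀.opNorm_extend_le h_dense h_e
      have h2 : ‖f₀‖ ≤ 1 := f₀ₗ.mkContinuous_norm_le zero_le_one hb
      calc ‖fbar‖ ≤ (1 : NNReal) * ‖f₀‖ := h1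
        _ ≤ 1 := by rw [NNReal.coe_one, one_mul]; exact h2
    refine ⟨fbar ∘L (Submodule.orthogonalProjectionOnto M : Y →L[ℂ] M), ?_, ?_⟩
    · ext z
      have hmemM : A z ∈ M := Submodule.le_topologicalClosure _ ⟨z, rfl⟩
      have hproj : Submodule.orthogonalProjectionOnto M (A z) = ⟨A z, hmemM⟩ := by
        exact Submodule.orthogonalProjectionOnto_mem_subspace_eq_self (⟨A z, hmemM⟩ : M)
      show fbar (Submodule.orthogonalProjectionOnto M (A z)) = B z
      rw [hproj]
      have : (⟨A z, hmemM⟩ : M) = e ⟨Aₗ z, ⟨z, rfl⟩⟩ := by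
        apply Subtype.ext; rfl
      rw [this, ContinuousLinearMap.extend_eq f₀ h_dense (isUniformEmbedding_of_bound e h_e).isUniformInducing]
      exact hf₀ z ⟨z, rfl⟩
    · calc ‖fbar ∘L (Submodule.orthogonalProjectionOnto M : Y →L[ℂ] M)‖
          ≤ ‖fbar‖ * ‖(Submodule.orthogonalProjectionOnto M : Y →L[ℂ] M)‖ := opNorm_comp_le _ _
        _ ≤ 1 * 1 := by
            exact mul_le_mul hfbar_norm (Submodule.orthogonalProjectionOnto_norm_le M)
              (norm_nonneg (Submodule.orthogonalProjectionOnto M : Y →L[ℂ] M)) zero_le_one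
        _ = 1 := one_mul 1
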